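/- Under the assumptions of the fair-dual-bound lemma: f differentiable L-smooth, g_i convex differentiable, C compact convex, p > L, λ ≥ 0. Let x̃ := argmin_{x∈C} L_p(x, z, λ) and x(z) := argmin over {x ∈ C : g(x) ≤ 0} of f(x) + (p/2)‖x - z‖², with associated optimal multiplier λ(z) ≥ 0 satisfying strong duality (x(z) minimizes L_p(·, z, λ(z)) over C and λ(z)_i g_i(x(z)) = 0). Then (p - L)‖x̃ - x(z)‖² ≤ ⟨λ(z) - λ, g(x̃)⟩. -/

import Mathlib

open scoped RealInnerProductSpace

section Aux

variable {E : Type*} [NormedAddCommGroup E] [InnerProductSpace ℝ E] [CompleteSpace E]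

/-- Lower descent bound from Lipschitz gradient:
`f b ≥ f a + ⟪f' a, b - a⟫ - L/2 ‖b - a‖²`. -/
lemma smooth_lower_aux (f : E → ℝ) (f' : E → E) (L : ℝ) (hL : 0 ≤ L)
    (hdiff : ∀ x, HasGradientAt f (f' x) x)
    (hlip : ∀ x x', ‖f' x - f' x'‖ ≤ L * ‖x - x'‖) (a b : E) :
    f a + ⟪f' a, b - a⟫ - L / 2 * ‖b - a‖ ^ 2 ≤ f b := by
  set v : E := b - a with hv
  have hcontf' : Continuous f' := by
    have : LipschitzWith L.toNNReal f' := by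
      refine LipschitzWith.of_dist_le_mul fun x y => ?_
      rw [dist_eq_norm, dist_eq_norm]
      calc ‖f' x - f' y‖ ≤ L * ‖x - y‖ := hlip x y
        _ = (L.toNNReal : ℝ) * ‖x - y‖ := by rw [Real.coe_toNNReal L hL]
    exact this.continuous
  have hγ : ∀ t : ℝ, HasDerivAt (fun s : ℝ => a + s • v) v t := by
    intro t
    have h1 : HasDerivAt (fun s : ℝ => s • v) ((1 : ℝ) • v) t :=
      (hasDerivAt_id t).smul_const v
    simpa using h1.const_add a
  have hφ : ∀ t : ℝ, HasDerivAt (fun s : ℝ => f (a + s • v))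
      (⟪f' (a + t • v), v⟫) t := by
    intro t
    have := ((hdiff (a + t • v)).hasFDerivAt).comp_hasDerivAt t (hγ t)
    simpa [InnerProductSpace.toDual_apply_apply, Function.comp_def] using this
  have hcontφ' : Continuous fun t : ℝ => ⟪f' (a + t • v), v⟫ := by
    exact (Continuous.inner (hcontf'.comp (by continuity)) continuous_const)
  have hint : ∫ t in (0:ℝ)..1, ⟪f' (a + t • v), v⟫ = f b - f a := by
    have := intervalIntegral.integral_eq_sub_of_hasDerivAt
      (f := fun s : ℝ => f (a + s • v)) (f' := fun t : ℝ => ⟪f' (a + t • v), v⟫)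
      (a := 0) (b := 1) (fun t _ => hφ t) (hcontφ'.intervalIntegrable 0 1)
    simpa [hv] using this
  have hlower : ∀ t ∈ Set.Icc (0:ℝ) 1,
      ⟪f' a, v⟫ - L * t * ‖v‖ ^ 2 ≤ ⟪f' (a + t • v), v⟫ := by
    intro t ht
    have h1 : ⟪f' (a + t • v) - f' a, v⟫ ≥ -(‖f' (a + t • v) - f' a‖ * ‖v‖) := by
      have := abs_real_inner_le_norm (f' (a + t • v) - f' a) v
      have := neg_abs_le ⟪f' (a + t • v) - f' a, v⟫
      linarith [abs_real_inner_le_norm (f' (a + t • v) - f' a) v,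
        neg_abs_le ⟪f' (a + t • v) - f' a, v⟫]
    have h2 : ‖f' (a + t • v) - f' a‖ ≤ L * (t * ‖v‖) := by
      have := hlip (a + t • v) a
      have heq : ‖a + t • v - a‖ = t * ‖v‖ := by
        rw [add_sub_cancel_left, norm_smul, Real.norm_eq_abs, abs_of_nonneg ht.1]
      rw [heq] at this
      linarith
    have h3 : ⟪f' (a + t • v), v⟫ = ⟪f' a, v⟫ + ⟪f' (a + t • v) - f' a, v⟫ := by
      rw [inner_sub_left]; ring
    have h4 : -(‖f' (a + t • v) - f' a‖ * ‖v‖) ≥ -(L * (t * ‖v‖) * ‖v‖) := by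
      have hnv : (0:ℝ) ≤ ‖v‖ := norm_nonneg v
      nlinarith
    nlinarith [norm_nonneg v]
  have hmono : ∫ t in (0:ℝ)..1, (⟪f' a, v⟫ - L * t * ‖v‖ ^ 2) ≤
      ∫ t in (0:ℝ)..1, ⟪f' (a + t • v), v⟫ := by
    apply intervalIntegral.integral_mono_on (by norm_num)
    · exact (Continuous.intervalIntegrable (by continuity) 0 1)
    · exact hcontφ'.intervalIntegrable 0 1
    · exact hlower
  have hcalc : ∫ t in (0:ℝ)..1, (⟪f' a, v⟫ - L * t * ‖v‖ ^ 2) =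
      ⟪f' a, v⟫ - L / 2 * ‖v‖ ^ 2 := by
    have h1 : ∀ t : ℝ, ⟪f' a, v⟫ - L * t * ‖v‖ ^ 2 =
        ⟪f' a, v⟫ - (L * ‖v‖ ^ 2) * t := fun t => by ring
    simp_rw [h1]
    rw [intervalIntegral.integral_sub (intervalIntegrable_const)
      ((Continuous.intervalIntegrable (by continuity) 0 1)),
      intervalIntegral.integral_const_mul, integral_id]
    simp; ring
  rw [hcalc] at hmono
  rw [hint] at hmono
  linarith

/-- Strong-convexity combination inequality for the augmented Lagrangian. -/
lemma combo_aux (f : E → ℝ) (f' : E → E) (L : ℝ) (hL : 0 ≤ L)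
    (hdiff : ∀ x, HasGradientAt f (f' x) x)
    (hlip : ∀ x x', ‖f' x - f' x'‖ ≤ L * ‖x - x'‖)
    (a b : E) (s t : ℝ) (hs : 0 ≤ s) (ht : 0 ≤ t) (hst : s + t = 1) :
    f (s • a + t • b) ≤ s * f a + t * f b + L / 2 * (s * t) * ‖a - b‖ ^ 2 := by
  have hs' : s = 1 - t := by linarith
  subst hs'
  set w : E := (1 - t) • a + t • b with hw
  have haw : a - w = t • (a - b) := by rw [hw]; module
  have hbw : b - w = (1 - t) • (b - a) := by rw [hw]; module
  have h1 := smooth_lower_aux f f' L hL hdiff hlip w a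
  have h2 := smooth_lower_aux f f' L hL hdiff hlip w b
  rw [haw] at h1
  rw [hbw] at h2
  rw [inner_smul_right] at h1 h2
  have hna : ‖t • (a - b)‖ = t * ‖a - b‖ := by
    rw [norm_smul, Real.norm_eq_abs, abs_of_nonneg ht]
  have hnb : ‖(1 - t) • (b - a)‖ = (1 - t) * ‖b - a‖ := by
    rw [norm_smul, Real.norm_eq_abs, abs_of_nonneg hs]
  rw [hna] at h1
  rw [hnb] at h2
  have hinner : (1 - t) * (t * ⟪f' w, a - b⟫) + t * ((1 - t) * ⟪f' w, b - a⟫) = 0 := by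
    have : (b - a) = -(a - b) := by abel
    rw [this, inner_neg_right]; ring
  have hnorm : ‖b - a‖ = ‖a - b‖ := norm_sub_rev b a
  rw [hnorm] at h2
  nlinarith [mul_nonneg hs ht, sq_nonneg ‖a - b‖]

/-- Exact parallelogram-type identity for the quadratic term. -/
lemma quad_aux (a b z : E) (s t : ℝ) (hst : s + t = 1) :
    ‖s • a + t • b - z‖ ^ 2 =
      s * ‖a - z‖ ^ 2 + t * ‖b - z‖ ^ 2 - s * t * ‖a - b‖ ^ 2 := by
  have hs' : s = 1 - t := by linarith
  subst hs'
  have hz : (1 - t) • a + t • b - z = (1 - t) • (a - z) + t • (b - z) := by module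
  rw [hz]
  have hab : a - b = (a - z) - (b - z) := by abel
  rw [hab]
  set u := a - z
  set v := b - z
  rw [← real_inner_self_eq_norm_sq, ← real_inner_self_eq_norm_sq,
    ← real_inner_self_eq_norm_sq, ← real_inner_self_eq_norm_sq]
  simp only [inner_add_add_self, inner_sub_sub_self, inner_smul_left, inner_smul_right,
    RCLike.ofReal_real_eq_id, id_eq, conj_trivial]
  have hcomm : ⟪v, u⟫ = ⟪u, v⟫ := real_inner_comm u v
  rw [hcomm]; ring

end Aux

/-- Key dual bound: `(p-L)‖x̃ - x(z)‖² ≤ ⟨λ(z) - λ, g(x̃)⟩`, where `x̃` minimizes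
`L_p(·, z, λ)` over `C` and `(x(z), λ(z))` is a primal-dual pair for the constrained
proximal problem. -/
theorem dual_gap_bound
    {n m : ℕ} (f : EuclideanSpace ℝ (Fin n) → ℝ)
    (f' : EuclideanSpace ℝ (Fin n) → EuclideanSpace ℝ (Fin n))
    (g : Fin m → EuclideanSpace ℝ (Fin n) → ℝ)
    (L p : ℝ) (hL : 0 ≤ L) (hp : L < p)
    (C : Set (EuclideanSpace ℝ (Fin n))) (hCcompact : IsCompact C) (hCconv : Convex ℝ C)
    (hdiff : ∀ x, HasGradientAt f (f' x) x)
    (hlip : ∀ x x', ‖f' x - f' x'‖ ≤ L * ‖x - x'‖)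
    (hgconv : ∀ i, ConvexOn ℝ Set.univ (g i))
    (Lp : EuclideanSpace ℝ (Fin n) → EuclideanSpace ℝ (Fin n) → (Fin m → ℝ) → ℝ)
    (hLp : ∀ x z lam, Lp x z lam = f x + (∑ i, lam i * g i x) + p / 2 * ‖x - z‖ ^ 2)
    (z : EuclideanSpace ℝ (Fin n))
    (lam : Fin m → ℝ) (hlam : ∀ i, 0 ≤ lam i)
    (xtilde : EuclideanSpace ℝ (Fin n)) (hxtilde : xtilde ∈ C)
    (hxtilde_min : ∀ u ∈ C, Lp xtilde z lam ≤ Lp u z lam)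
    (xz : EuclideanSpace ℝ (Fin n)) (hxz : xz ∈ C) (hxz_feas : ∀ i, g i xz ≤ 0)
    (hxz_min : ∀ u ∈ C, (∀ i, g i u ≤ 0) →
      f xz + p / 2 * ‖xz - z‖ ^ 2 ≤ f u + p / 2 * ‖u - z‖ ^ 2)
    (lamz : Fin m → ℝ) (hlamz : ∀ i, 0 ≤ lamz i)
    (hlamz_min : ∀ u ∈ C, Lp xz z lamz ≤ Lp u z lamz)
    (hlamz_cs : ∀ i, lamz i * g i xz = 0) :
    (p - L) * ‖xtilde - xz‖ ^ 2 ≤ ∑ i, (lamz i - lam i) * g i xtilde := by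
  -- strong-convexity combination inequality for Lp
  have combo : ∀ (mu : Fin m → ℝ), (∀ i, 0 ≤ mu i) →
      ∀ (a b : EuclideanSpace ℝ (Fin n)) (s t : ℝ), 0 ≤ s → 0 ≤ t → s + t = 1 →
      Lp (s • a + t • b) z mu ≤
        s * Lp a z mu + t * Lp b z mu - (p - L) / 2 * (s * t) * ‖a - b‖ ^ 2 := by
    intro mu hmu a b s t hs ht hst
    rw [hLp, hLp, hLp]
    have hf := combo_aux f f' L hL hdiff hlip a b s t hs ht hst
    have hg : ∑ i, mu i * g i (s • a + t • b) ≤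
        s * ∑ i, mu i * g i a + t * ∑ i, mu i * g i b := by
      rw [Finset.mul_sum, Finset.mul_sum, ← Finset.sum_add_distrib]
      apply Finset.sum_le_sum
      intro i _
      have := (hgconv i).2 (Set.mem_univ a) (Set.mem_univ b) hs ht hst
      simp only [smul_eq_mul] at this
      nlinarith [hmu i]
    have hq := quad_aux a b z s t hst
    have hp2 : (0:ℝ) < p := lt_of_le_of_lt hL hp
    nlinarith [mul_nonneg hs ht, sq_nonneg ‖a - b‖]
  -- quadratic growth at minimizers
  have growth : ∀ (mu : Fin m → ℝ), (∀ i, 0 ≤ mu i) →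
      ∀ xs ∈ C, (∀ u ∈ C, Lp xs z mu ≤ Lp u z mu) →
      ∀ u ∈ C, Lp xs z mu + (p - L) / 2 * ‖u - xs‖ ^ 2 ≤ Lp u z mu := by
    intro mu hmu xs hxs hmin u hu
    set c : ℝ := (p - L) / 2 with hc
    have hcpos : 0 < c := by simp [hc]; linarith
    by_cases hzero : ‖u - xs‖ = 0
    · rw [hzero]
      simpa using hmin u hu
    have hnpos : 0 < ‖u - xs‖ ^ 2 := by positivity
    apply le_of_forall_pos_le_add
    intro ε hε
    set t : ℝ := min 1 (ε / (c * ‖u - xs‖ ^ 2)) with htdef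
    have htpos : 0 < t := lt_min one_pos (by positivity)
    have ht1 : t ≤ 1 := min_le_left _ _
    have hmem : (1 - t) • xs + t • u ∈ C :=
      hCconv hxs hu (by linarith) (le_of_lt htpos) (by ring)
    have h1 := hmin _ hmem
    have h2 := combo mu hmu xs u (1 - t) t (by linarith) (le_of_lt htpos) (by ring)
    -- h1 : Lp xs ≤ Lp w ; h2 : Lp w ≤ (1-t) Lp xs + t Lp u - c (1-t) t ‖xs-u‖²
    have hnorm : ‖xs - u‖ = ‖u - xs‖ := norm_sub_rev xs u
    rw [hnorm] at h2
    have key : t * Lp xs z mu ≤ t * Lp u z mu - c * (1 - t) * t * ‖u - xs‖ ^ 2 := by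
      nlinarith
    have key2 : Lp xs z mu ≤ Lp u z mu - c * (1 - t) * ‖u - xs‖ ^ 2 :=
      le_of_mul_le_mul_left (by nlinarith [key]) htpos
    have hte : c * t * ‖u - xs‖ ^ 2 ≤ ε := by
      have ht2 : t ≤ ε / (c * ‖u - xs‖ ^ 2) := min_le_right _ _
      have hpos2 : 0 < c * ‖u - xs‖ ^ 2 := by positivity
      calc c * t * ‖u - xs‖ ^ 2 ≤ c * (ε / (c * ‖u - xs‖ ^ 2)) * ‖u - xs‖ ^ 2 := by
            apply mul_le_mul_of_nonneg_right _ (le_of_lt hnpos)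
            exact mul_le_mul_of_nonneg_left ht2 (le_of_lt hcpos)
        _ = ε := by field_simp
    nlinarith
  -- apply growth twice
  have G1 := growth lam hlam xtilde hxtilde hxtilde_min xz hxz
  have G2 := growth lamz hlamz xz hxz hlamz_min xtilde hxtilde
  -- G1 : Lp x̃ lam + c‖xz - x̃‖² ≤ Lp xz lam
  -- G2 : Lp xz lamz + c‖x̃ - xz‖² ≤ Lp x̃ lamz
  have hnorm : ‖xz - xtilde‖ = ‖xtilde - xz‖ := norm_sub_rev xz xtilde
  rw [hnorm] at G1
  rw [hLp, hLp] at G1 G2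
  -- sum of complementary slackness and feasibility
  have hcs : ∑ i, lamz i * g i xz = 0 := by
    apply Finset.sum_eq_zero; intro i _; exact hlamz_cs i
  have hfeas : ∑ i, lam i * g i xz ≤ 0 := by
    apply Finset.sum_nonpos; intro i _
    exact mul_nonpos_of_nonneg_of_nonpos (hlam i) (hxz_feas i)
  have hsum : ∑ i, (lamz i - lam i) * g i xtilde =
      (∑ i, lamz i * g i xtilde) - ∑ i, lam i * g i xtilde := by
    rw [← Finset.sum_sub_distrib]; congr 1; ext i; ring
  rw [hsum]
  linarith
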